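/- Let Ψ be an HSOQLS(hⁿ) (a partitioned incomplete quantum Latin square on ℂ^{hn} with diagonal holes V₁,...,V_n of dimension h that is orthogonal to its conjugate transpose) and let Φ¹, Φ² be a pair of orthogonal quantum Latin squares of dimension m. Define Φ_{(i,l),(j,k)} = Ψ_{i,j} ⊗ Φ¹_{l,k} if i ≤ j and Φ_{(i,l),(j,k)} = Ψ_{i,j} ⊗ conj(Φ²_{k,l}) if i > j. Then Φ is an HSOQLS((hm)ⁿ) with holes V_s ⊗ ℂ^m. -/

import Mathlib

noncomputable section

/-- The inner product on a complex inner product space, as a function into `ℂ`. -/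
def ip {E : Type*} [NormedAddCommGroup E] [InnerProductSpace ℂ E] (x y : E) : ℂ :=
  inner ℂ x y

/-- Concrete tensor product `ℂ^a ⊗ ℂ^b ≃ ℂ^(a × b)` of two vectors. -/
def tens {a b : Type*} [Fintype a] [Fintype b] (u : EuclideanSpace ℂ a)
    (v : EuclideanSpace ℂ b) : EuclideanSpace ℂ (a × b) :=
  WithLp.toLp 2 (fun p => u p.1 * v p.2)

/-- Entrywise complex conjugation of a vector (in the standard basis). -/
def conjE {ι : Type*} [Fintype ι] (v : EuclideanSpace ℂ ι) : EuclideanSpace ℂ ι :=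
  WithLp.toLp 2 (fun k => star (v k))

/-- The hole subspace `V_s` of `ℂ^{[n] × α}`: the span of the standard basis vectors
indexed by `{s} × α`. A partitioned incomplete quantum Latin square of type `|α|ⁿ` has
rows and columns indexed by `Fin n × α`, the hole `V_s` corresponding to indices
with first component `s`. -/
def holeSub (n : ℕ) (α : Type*) [Fintype α] [DecidableEq α] (s : Fin n) :
    Submodule ℂ (EuclideanSpace ℂ (Fin n × α)) :=
  Submodule.span ℂ (Set.range fun x : α => EuclideanSpace.single ((s, x)) (1 : ℂ))

/-- A partitioned incomplete quantum Latin square (PIQLS) of type `|α|ⁿ` on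
`ℂ^{[n] × α}`, with holes `V_1, …, V_n` on the diagonal: the cells `(r, c)` with
`r.1 = c.1` are empty (unconstrained), and every row (resp. column) indexed in hole `s`
consists of vectors forming an orthonormal basis of the orthogonal complement `V_sᗮ`. -/
def IsPIQLS {n : ℕ} {α : Type*} [Fintype α] [DecidableEq α]
    (Ψ : (Fin n × α) → (Fin n × α) → EuclideanSpace ℂ (Fin n × α)) : Prop :=
  (∀ r : Fin n × α,
    Orthonormal ℂ (fun c : {c : Fin n × α // c.1 ≠ r.1} => Ψ r c) ∧
    (∀ c : Fin n × α, c.1 ≠ r.1 → Ψ r c ∈ (holeSub n α r.1)ᗮ) ∧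
    Submodule.span ℂ (Set.range fun c : {c : Fin n × α // c.1 ≠ r.1} => Ψ r c) =
      (holeSub n α r.1)ᗮ) ∧
  (∀ c : Fin n × α,
    Orthonormal ℂ (fun r : {r : Fin n × α // r.1 ≠ c.1} => Ψ r c) ∧
    (∀ r : Fin n × α, r.1 ≠ c.1 → Ψ r c ∈ (holeSub n α c.1)ᗮ) ∧
    Submodule.span ℂ (Set.range fun r : {r : Fin n × α // r.1 ≠ c.1} => Ψ (r : Fin n × α) c) =
      (holeSub n α c.1)ᗮ)

/-- The subspace `⊕_s V_s ⊗ V_s` of `ℂ^{[n]×α} ⊗ ℂ^{[n]×α}`. -/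
def bigHole (n : ℕ) (α : Type*) [Fintype α] [DecidableEq α] :
    Submodule ℂ (EuclideanSpace ℂ ((Fin n × α) × (Fin n × α))) :=
  Submodule.span ℂ (Set.range fun z : Fin n × α × α =>
    EuclideanSpace.single (((z.1, z.2.1), (z.1, z.2.2))) (1 : ℂ))

/-- Two PIQLSs with the same holes are orthogonal: the tensor products
`Ψ¹_{r,c} ⊗ Ψ²_{r,c}` over all filled cells form an orthonormal basis of
`(ℂ^D ⊗ ℂ^D) ⊖ ⊕_s (V_s ⊗ V_s)`. -/
def OrthPIQLS {n : ℕ} {α : Type*} [Fintype α] [DecidableEq α]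
    (Ψ₁ Ψ₂ : (Fin n × α) → (Fin n × α) → EuclideanSpace ℂ (Fin n × α)) : Prop :=
  Orthonormal ℂ (fun p : {q : (Fin n × α) × (Fin n × α) // q.1.1 ≠ q.2.1} =>
    tens (Ψ₁ p.1.1 p.1.2) (Ψ₂ p.1.1 p.1.2)) ∧
  (∀ p : {q : (Fin n × α) × (Fin n × α) // q.1.1 ≠ q.2.1},
    tens (Ψ₁ p.1.1 p.1.2) (Ψ₂ p.1.1 p.1.2) ∈ (bigHole n α)ᗮ) ∧
  Submodule.span ℂ (Set.range fun p : {q : (Fin n × α) × (Fin n × α) // q.1.1 ≠ q.2.1} =>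
    tens (Ψ₁ p.1.1 p.1.2) (Ψ₂ p.1.1 p.1.2)) = (bigHole n α)ᗮ

/-- A PIQLS is self-orthogonal (an HSOQLS) if the vectors `Ψ_{r,c} ⊗ conj (Ψ_{c,r})`
over all filled cells form an orthonormal basis of `(ℂ^D ⊗ ℂ^D) ⊖ ⊕_s (V_s ⊗ V_s)`. -/
def SelfOrthPIQLS {n : ℕ} {α : Type*} [Fintype α] [DecidableEq α]
    (Ψ : (Fin n × α) → (Fin n × α) → EuclideanSpace ℂ (Fin n × α)) : Prop :=
  Orthonormal ℂ (fun p : {q : (Fin n × α) × (Fin n × α) // q.1.1 ≠ q.2.1} =>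
    tens (Ψ p.1.1 p.1.2) (conjE (Ψ p.1.2 p.1.1))) ∧
  (∀ p : {q : (Fin n × α) × (Fin n × α) // q.1.1 ≠ q.2.1},
    tens (Ψ p.1.1 p.1.2) (conjE (Ψ p.1.2 p.1.1)) ∈ (bigHole n α)ᗮ) ∧
  Submodule.span ℂ (Set.range fun p : {q : (Fin n × α) × (Fin n × α) // q.1.1 ≠ q.2.1} =>
    tens (Ψ p.1.1 p.1.2) (conjE (Ψ p.1.2 p.1.1))) = (bigHole n α)ᗮ

/-- A quantum Latin square over index set `ι` with values in `E`. -/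
def IsQLSOn {ι : Type*} {E : Type*} [NormedAddCommGroup E] [InnerProductSpace ℂ E]
    (Φ : ι → ι → E) : Prop :=
  (∀ i, Orthonormal ℂ (Φ i)) ∧ (∀ j, Orthonormal ℂ (fun i => Φ i j))

/-- Orthogonality of two quantum Latin squares. -/
def OrthQLSOn {ι : Type*} [DecidableEq ι] {E : Type*} [NormedAddCommGroup E]
    [InnerProductSpace ℂ E] (Φ Ψ : ι → ι → E) : Prop :=
  ∀ i j i' j', ip (Φ i j) (Φ i' j') * ip (Ψ i j) (Ψ i' j') =
    if i = i' ∧ j = j' then 1 else 0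

/-! ### Auxiliary material -/

open Finset Submodule Module

lemma ip_apply {ι : Type*} [Fintype ι] (u v : EuclideanSpace ℂ ι) :
    ip u v = ∑ i, star (u i) * v i := by
  simp [ip, PiLp.inner_apply, RCLike.inner_apply, mul_comm]

lemma ip_tens {a b : Type*} [Fintype a] [Fintype b] (u u' : EuclideanSpace ℂ a)
    (v v' : EuclideanSpace ℂ b) : ip (tens u v) (tens u' v') = ip u u' * ip v v' := by
  simp only [ip_apply, Finset.sum_mul_sum, tens, PiLp.toLp_apply, Fintype.sum_prod_type, star_mul']
  congr 1; ext i; congr 1; ext j; ring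

/-- The "reassociated" tensor `ℂ^(a×b) ⊗ ℂ^c → ℂ^(a×(b×c))`. -/
def mk2 {a b c : Type*} [Fintype a] [Fintype b] [Fintype c]
    (u : EuclideanSpace ℂ (a × b)) (v : EuclideanSpace ℂ c) :
    EuclideanSpace ℂ (a × (b × c)) :=
  WithLp.toLp 2 (fun p => u (p.1, p.2.1) * v p.2.2)

lemma ip_mk2 {a b c : Type*} [Fintype a] [Fintype b] [Fintype c]
    (u u' : EuclideanSpace ℂ (a × b)) (v v' : EuclideanSpace ℂ c) :
    ip (mk2 u v) (mk2 u' v') = ip u u' * ip v v' := by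
  rw [ip_apply, ip_apply, ip_apply, Finset.sum_mul_sum]
  have h2 := Fintype.sum_prod_type (f := fun q : (a × b) × c =>
    star (u q.1) * u' q.1 * (star (v q.2) * v' q.2))
  rw [← h2]
  exact Fintype.sum_equiv (Equiv.prodAssoc a b c).symm _ _
    (fun p => by simp only [mk2, PiLp.toLp_apply, Equiv.prodAssoc_symm_apply, star_mul']; ring)

lemma ip_conjE {ι : Type*} [Fintype ι] (u v : EuclideanSpace ℂ ι) :
    ip (conjE u) (conjE v) = star (ip u v) := by
  simp [ip_apply, conjE, mul_comm]

lemma orthonormal_single_comp {ι β : Type*} [Fintype ι] [DecidableEq ι] [DecidableEq β]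
    {g : β → ι} (hg : Function.Injective g) :
    Orthonormal ℂ (fun x : β => EuclideanSpace.single (g x) (1 : ℂ)) := by
  rw [orthonormal_iff_ite]
  intro i j
  rw [EuclideanSpace.inner_single_left, EuclideanSpace.single_apply]
  simp [hg.eq_iff, eq_comm]

lemma mem_orth_span {E : Type*} [NormedAddCommGroup E] [InnerProductSpace ℂ E]
    {S : Set E} {v : E} (h : ∀ u ∈ S, (inner ℂ u v : ℂ) = 0) :
    v ∈ (span ℂ S)ᗮ := by
  intro u hu
  induction hu using Submodule.span_induction with
  | mem x hx => exact h x hx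
  | zero => simp
  | add x y _ _ hx hy => rw [inner_add_left, hx, hy, add_zero]
  | smul a x _ hx => rw [inner_smul_left, hx, mul_zero]

lemma span_eq_of_orthonormal {ι E : Type*} [Fintype ι] [NormedAddCommGroup E]
    [InnerProductSpace ℂ E] [FiniteDimensional ℂ E] {f : ι → E} {W : Submodule ℂ E}
    (ho : Orthonormal ℂ f) (hmem : ∀ i, f i ∈ W)
    (hcard : Fintype.card ι = finrank ℂ W) :
    span ℂ (Set.range f) = W := by
  refine Submodule.eq_of_le_of_finrank_le (span_le.2 (Set.range_subset_iff.2 hmem)) ?_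
  rw [finrank_span_eq_card ho.linearIndependent, hcard]

lemma finrank_orth_holeSub (n : ℕ) (α : Type*) [Fintype α] [DecidableEq α] (s : Fin n) :
    finrank ℂ ((holeSub n α s)ᗮ : Submodule ℂ (EuclideanSpace ℂ (Fin n × α))) =
      Fintype.card (Fin n × α) - Fintype.card α := by
  have hinj : Function.Injective (fun x : α => ((s, x) : Fin n × α)) := by
    intro a b hab
    simpa using congrArg Prod.snd hab
  have h1 : finrank ℂ (holeSub n α s) = Fintype.card α :=
    finrank_span_eq_card (orthonormal_single_comp hinj).linearIndependent
  have h2 := Submodule.finrank_add_finrank_orthogonal (𝕜 := ℂ) (holeSub n α s)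
  rw [h1, finrank_euclideanSpace] at h2
  omega

lemma finrank_orth_bigHole (n : ℕ) (α : Type*) [Fintype α] [DecidableEq α] :
    finrank ℂ ((bigHole n α)ᗮ : Submodule ℂ (EuclideanSpace ℂ ((Fin n × α) × (Fin n × α)))) =
      Fintype.card ((Fin n × α) × (Fin n × α)) - Fintype.card (Fin n × α × α) := by
  have hinj : Function.Injective (fun z : Fin n × α × α =>
      (((z.1, z.2.1), (z.1, z.2.2)) : (Fin n × α) × (Fin n × α))) := by
    intro z z' e
    simp only [Prod.ext_iff] at e ⊢
    tauto
  have h1 : finrank ℂ (bigHole n α) = Fintype.card (Fin n × α × α) :=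
    finrank_span_eq_card (orthonormal_single_comp hinj).linearIndependent
  have h2 := Submodule.finrank_add_finrank_orthogonal (𝕜 := ℂ) (bigHole n α)
  rw [h1, finrank_euclideanSpace] at h2
  omega

lemma card_ne_fst {n : ℕ} (β : Type*) [Fintype β] [DecidableEq β] (s : Fin n) :
    Fintype.card {c : Fin n × β // c.1 ≠ s} = Fintype.card (Fin n × β) - Fintype.card β := by
  classical
  have e : {c : Fin n × β // c.1 = s} ≃ β :=
    { toFun := fun c => c.1.2
      invFun := fun x => ⟨(s, x), rfl⟩
      left_inv := by rintro ⟨⟨a, b⟩, hab⟩; cases hab; rfl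
      right_inv := fun x => rfl }
  rw [Fintype.card_subtype_compl (fun c : Fin n × β => c.1 = s), Fintype.card_congr e]

lemma card_ne_pair {n : ℕ} (β : Type*) [Fintype β] [DecidableEq β] :
    Fintype.card {q : (Fin n × β) × (Fin n × β) // q.1.1 ≠ q.2.1} =
      Fintype.card ((Fin n × β) × (Fin n × β)) - Fintype.card (Fin n × β × β) := by
  classical
  have e : {q : (Fin n × β) × (Fin n × β) // q.1.1 = q.2.1} ≃ Fin n × β × β :=
    { toFun := fun q => (q.1.1.1, q.1.1.2, q.1.2.2)
      invFun := fun z => ⟨((z.1, z.2.1), (z.1, z.2.2)), rfl⟩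
      left_inv := by rintro ⟨⟨⟨a, b⟩, ⟨a', b'⟩⟩, hab⟩; cases hab; rfl
      right_inv := fun z => rfl }
  rw [Fintype.card_subtype_compl (fun q : (Fin n × β) × (Fin n × β) => q.1.1 = q.2.1),
    Fintype.card_congr e]

/-! ### The product construction -/

variable {n h m : ℕ}

/-- Projection to the `Ψ`-part of an index. -/
def prj (r : Fin n × (Fin h × Fin m)) : Fin n × Fin h := (r.1, r.2.1)

/-- The linear-order key. -/
def keyf (h : ℕ) {n m : ℕ} (r : Fin n × (Fin h × Fin m)) : ℕ :=
  (r.1 : ℕ) * h + (r.2.1 : ℕ)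

lemma keyf_eq_iff (r c : Fin n × (Fin h × Fin m)) :
    keyf h r = keyf h c ↔ prj r = prj c := by
  constructor
  · intro he
    have hb : (r.2.1 : ℕ) < h := r.2.1.isLt
    have hb' : (c.2.1 : ℕ) < h := c.2.1.isLt
    have hpos : 0 < h := Nat.lt_of_le_of_lt (Nat.zero_le _) hb
    have h1 : ((r.1 : ℕ) * h + (r.2.1 : ℕ)) / h = (r.1 : ℕ) := by
      rw [mul_comm, Nat.mul_add_div hpos, Nat.div_eq_of_lt hb, add_zero]
    have h2 : ((c.1 : ℕ) * h + (c.2.1 : ℕ)) / h = (c.1 : ℕ) := by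
      rw [mul_comm, Nat.mul_add_div hpos, Nat.div_eq_of_lt hb', add_zero]
    have ha : (r.1 : ℕ) = (c.1 : ℕ) := by
      rw [← h1, ← h2]; exact congrArg (· / h) he
    have hbb : (r.2.1 : ℕ) = (c.2.1 : ℕ) := by
      have he0 : (r.1 : ℕ) * h + (r.2.1 : ℕ) = (c.1 : ℕ) * h + (c.2.1 : ℕ) := he
      rw [ha] at he0
      omega
    simp only [prj, Prod.ext_iff]
    exact ⟨Fin.ext ha, Fin.ext hbb⟩
  · intro he
    have h1 : r.1 = c.1 := (Prod.ext_iff.1 he).1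
    have h2 : r.2.1 = c.2.1 := (Prod.ext_iff.1 he).2
    unfold keyf
    rw [h1, h2]

lemma keyf_ne {r c : Fin n × (Fin h × Fin m)} (hne : r.1 ≠ c.1) :
    keyf h r ≠ keyf h c := fun hk =>
  hne (Prod.ext_iff.1 ((keyf_eq_iff r c).1 hk)).1

/-- The `m`-dimensional factor of the product construction. -/
def bigX (Φ₁ Φ₂ : Fin m → Fin m → EuclideanSpace ℂ (Fin m))
    (r c : Fin n × (Fin h × Fin m)) : EuclideanSpace ℂ (Fin m) :=
  if keyf h r ≤ keyf h c then Φ₁ r.2.2 c.2.2 else conjE (Φ₂ c.2.2 r.2.2)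

/-- The product construction. -/
def bigPhi (Ψ : (Fin n × Fin h) → (Fin n × Fin h) → EuclideanSpace ℂ (Fin n × Fin h))
    (Φ₁ Φ₂ : Fin m → Fin m → EuclideanSpace ℂ (Fin m))
    (r c : Fin n × (Fin h × Fin m)) : EuclideanSpace ℂ (Fin n × (Fin h × Fin m)) :=
  mk2 (Ψ (prj r) (prj c)) (bigX Φ₁ Φ₂ r c)

lemma eq_iff_prj (c c' : Fin n × (Fin h × Fin m)) :
    c = c' ↔ prj c = prj c' ∧ c.2.2 = c'.2.2 := by
  obtain ⟨a, b, d⟩ := c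
  obtain ⟨a', b', d'⟩ := c'
  simp only [prj, Prod.ext_iff]
  tauto

section main

variable (Ψ : (Fin n × Fin h) → (Fin n × Fin h) → EuclideanSpace ℂ (Fin n × Fin h))
variable (Φ₁ Φ₂ : Fin m → Fin m → EuclideanSpace ℂ (Fin m))

lemma ip_bigPhi (r c r' c' : Fin n × (Fin h × Fin m)) :
    ip (bigPhi Ψ Φ₁ Φ₂ r c) (bigPhi Ψ Φ₁ Φ₂ r' c') =
      ip (Ψ (prj r) (prj c)) (Ψ (prj r') (prj c')) *
        ip (bigX Φ₁ Φ₂ r c) (bigX Φ₁ Φ₂ r' c') :=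
  ip_mk2 _ _ _ _

variable {Ψ Φ₁ Φ₂}

lemma row_on (hΨ : IsPIQLS Ψ) (hΦ₁ : IsQLSOn Φ₁) (hΦ₂ : IsQLSOn Φ₂)
    (r : Fin n × (Fin h × Fin m)) :
    Orthonormal ℂ (fun c : {c : Fin n × (Fin h × Fin m) // c.1 ≠ r.1} =>
      bigPhi Ψ Φ₁ Φ₂ r c) := by
  rw [orthonormal_iff_ite]
  rintro ⟨c, hc⟩ ⟨c', hc'⟩
  have h1 : ip (Ψ (prj r) (prj c)) (Ψ (prj r) (prj c')) =
      if prj c = prj c' then 1 else 0 := by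
    have := orthonormal_iff_ite.1 (hΨ.1 (prj r)).1 ⟨prj c, hc⟩ ⟨prj c', hc'⟩
    simpa [ip, Subtype.ext_iff] using this
  show ip (bigPhi Ψ Φ₁ Φ₂ r c) (bigPhi Ψ Φ₁ Φ₂ r c') = _
  rw [ip_bigPhi, h1]
  simp only [Subtype.mk_eq_mk]
  by_cases hk : keyf h r ≤ keyf h c <;> by_cases hk' : keyf h r ≤ keyf h c'
  · have h2 : ip (Φ₁ r.2.2 c.2.2) (Φ₁ r.2.2 c'.2.2) =
        if c.2.2 = c'.2.2 then 1 else 0 := by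
      simpa [ip] using orthonormal_iff_ite.1 (hΦ₁.1 r.2.2) c.2.2 c'.2.2
    simp only [bigX, if_pos hk, if_pos hk', h2]
    by_cases e1 : prj c = prj c' <;> by_cases e2 : c.2.2 = c'.2.2 <;>
      simp [e1, e2, eq_iff_prj]
  · have hne : prj c ≠ prj c' := by
      intro he
      exact hk' (by rwa [← (keyf_eq_iff c c').2 he])
    have hcc : c ≠ c' := fun e => hne (by rw [e])
    simp [hne, hcc]
  · have hne : prj c ≠ prj c' := by
      intro he
      exact hk (by rwa [(keyf_eq_iff c c').2 he])
    have hcc : c ≠ c' := fun e => hne (by rw [e])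
    simp [hne, hcc]
  · have h2 : ip (conjE (Φ₂ c.2.2 r.2.2)) (conjE (Φ₂ c'.2.2 r.2.2)) =
        if c.2.2 = c'.2.2 then 1 else 0 := by
      rw [ip_conjE]
      have := orthonormal_iff_ite.1 (hΦ₂.2 r.2.2) c.2.2 c'.2.2
      rw [show ip (Φ₂ c.2.2 r.2.2) (Φ₂ c'.2.2 r.2.2) =
        (if c.2.2 = c'.2.2 then 1 else 0) from this]
      split <;> simp
    simp only [bigX, if_neg hk, if_neg hk', h2]
    by_cases e1 : prj c = prj c' <;> by_cases e2 : c.2.2 = c'.2.2 <;>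
      simp [e1, e2, eq_iff_prj]

lemma col_on (hΨ : IsPIQLS Ψ) (hΦ₁ : IsQLSOn Φ₁) (hΦ₂ : IsQLSOn Φ₂)
    (c : Fin n × (Fin h × Fin m)) :
    Orthonormal ℂ (fun r : {r : Fin n × (Fin h × Fin m) // r.1 ≠ c.1} =>
      bigPhi Ψ Φ₁ Φ₂ r c) := by
  rw [orthonormal_iff_ite]
  rintro ⟨r, hr⟩ ⟨r', hr'⟩
  have h1 : ip (Ψ (prj r) (prj c)) (Ψ (prj r') (prj c)) =
      if prj r = prj r' then 1 else 0 := by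
    have := orthonormal_iff_ite.1 (hΨ.2 (prj c)).1 ⟨prj r, hr⟩ ⟨prj r', hr'⟩
    simpa [ip, Subtype.ext_iff] using this
  show ip (bigPhi Ψ Φ₁ Φ₂ r c) (bigPhi Ψ Φ₁ Φ₂ r' c) = _
  rw [ip_bigPhi, h1]
  simp only [Subtype.mk_eq_mk]
  by_cases hk : keyf h r ≤ keyf h c <;> by_cases hk' : keyf h r' ≤ keyf h c
  · have h2 : ip (Φ₁ r.2.2 c.2.2) (Φ₁ r'.2.2 c.2.2) =
        if r.2.2 = r'.2.2 then 1 else 0 := by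
      simpa [ip] using orthonormal_iff_ite.1 (hΦ₁.2 c.2.2) r.2.2 r'.2.2
    simp only [bigX, if_pos hk, if_pos hk', h2]
    by_cases e1 : prj r = prj r' <;> by_cases e2 : r.2.2 = r'.2.2 <;>
      simp [e1, e2, eq_iff_prj]
  · have hne : prj r ≠ prj r' := by
      intro he
      exact hk' (by rwa [← (keyf_eq_iff r r').2 he])
    have hcc : r ≠ r' := fun e => hne (by rw [e])
    simp [hne, hcc]
  · have hne : prj r ≠ prj r' := by
      intro he
      exact hk (by rwa [(keyf_eq_iff r r').2 he])
    have hcc : r ≠ r' := fun e => hne (by rw [e])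
    simp [hne, hcc]
  · have h2 : ip (conjE (Φ₂ c.2.2 r.2.2)) (conjE (Φ₂ c.2.2 r'.2.2)) =
        if r.2.2 = r'.2.2 then 1 else 0 := by
      rw [ip_conjE]
      have := orthonormal_iff_ite.1 (hΦ₂.1 c.2.2) r.2.2 r'.2.2
      rw [show ip (Φ₂ c.2.2 r.2.2) (Φ₂ c.2.2 r'.2.2) =
        (if r.2.2 = r'.2.2 then 1 else 0) from this]
      split <;> simp
    simp only [bigX, if_neg hk, if_neg hk', h2]
    by_cases e1 : prj r = prj r' <;> by_cases e2 : r.2.2 = r'.2.2 <;>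
      simp [e1, e2, eq_iff_prj]

lemma self_on (hΨself : SelfOrthPIQLS Ψ) (hΦo : OrthQLSOn Φ₁ Φ₂) :
    Orthonormal ℂ (fun p : {q : (Fin n × (Fin h × Fin m)) × (Fin n × (Fin h × Fin m)) //
        q.1.1 ≠ q.2.1} =>
      tens (bigPhi Ψ Φ₁ Φ₂ p.1.1 p.1.2) (conjE (bigPhi Ψ Φ₁ Φ₂ p.1.2 p.1.1))) := by
  rw [orthonormal_iff_ite]
  rintro ⟨⟨r, c⟩, hrc⟩ ⟨⟨r', c'⟩, hrc'⟩
  have hrc0 : r.1 ≠ c.1 := hrc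
  have hrc0' : r'.1 ≠ c'.1 := hrc'
  show ip _ _ = _
  rw [ip_tens, ip_conjE, ip_bigPhi, ip_bigPhi]
  have h1 : ip (Ψ (prj r) (prj c)) (Ψ (prj r') (prj c')) *
      star (ip (Ψ (prj c) (prj r)) (Ψ (prj c') (prj r'))) =
      if (prj r, prj c) = (prj r', prj c') then 1 else 0 := by
    have h0 := orthonormal_iff_ite.1 hΨself.1 ⟨(prj r, prj c), hrc0⟩
      ⟨(prj r', prj c'), hrc0'⟩
    rw [show (inner ℂ (tens (Ψ (prj r) (prj c)) (conjE (Ψ (prj c) (prj r))))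
          (tens (Ψ (prj r') (prj c')) (conjE (Ψ (prj c') (prj r')))) : ℂ) = ip _ _ from rfl,
      ip_tens, ip_conjE] at h0
    simpa [Subtype.ext_iff] using h0
  have hre : ∀ (a b c d : ℂ), a * b * star (c * d) = a * star c * (b * star d) := by
    intro a b c d; rw [star_mul']; ring
  rw [hre, h1]
  by_cases hpp : (prj r, prj c) = (prj r', prj c')
  · obtain ⟨hpr, hpc⟩ := Prod.mk.injEq .. ▸ hpp
    have hkr : keyf h r = keyf h r' := (keyf_eq_iff _ _).2 hpr
    have hkc : keyf h c = keyf h c' := (keyf_eq_iff _ _).2 hpc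
    rw [if_pos hpp, one_mul]
    have hkne : keyf h r ≠ keyf h c := keyf_ne hrc0
    by_cases hk : keyf h r ≤ keyf h c
    · have hnk : ¬ keyf h c ≤ keyf h r := fun hle => hkne (le_antisymm hk hle)
      have hk' : keyf h r' ≤ keyf h c' := by rw [← hkr, ← hkc]; exact hk
      have hnk' : ¬ keyf h c' ≤ keyf h r' := by rw [← hkr, ← hkc]; exact hnk
      simp only [bigX, if_pos hk, if_pos hk', if_neg hnk, if_neg hnk']
      rw [ip_conjE, star_star, hΦo r.2.2 c.2.2 r'.2.2 c'.2.2]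
      by_cases e1 : r.2.2 = r'.2.2 <;> by_cases e2 : c.2.2 = c'.2.2 <;>
        simp [e1, e2, Subtype.ext_iff, Prod.ext_iff, eq_iff_prj r r', eq_iff_prj c c',
          hpr, hpc]
    · have hk2 : keyf h c ≤ keyf h r := le_of_not_ge hk
      have hnk' : ¬ keyf h r' ≤ keyf h c' := by rw [← hkr, ← hkc]; exact hk
      have hk2' : keyf h c' ≤ keyf h r' := by rw [← hkr, ← hkc]; exact hk2
      simp only [bigX, if_neg hk, if_neg hnk', if_pos hk2, if_pos hk2']
      rw [ip_conjE, ← star_mul',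
        show ip (Φ₂ c.2.2 r.2.2) (Φ₂ c'.2.2 r'.2.2) * ip (Φ₁ c.2.2 r.2.2) (Φ₁ c'.2.2 r'.2.2)
          = ip (Φ₁ c.2.2 r.2.2) (Φ₁ c'.2.2 r'.2.2) * ip (Φ₂ c.2.2 r.2.2) (Φ₂ c'.2.2 r'.2.2)
          from mul_comm _ _, hΦo c.2.2 r.2.2 c'.2.2 r'.2.2]
      by_cases e1 : r.2.2 = r'.2.2 <;> by_cases e2 : c.2.2 = c'.2.2 <;>
        simp [e1, e2, Subtype.ext_iff, Prod.ext_iff, eq_iff_prj r r', eq_iff_prj c c',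
          hpr, hpc]
  · have hne2 : ¬((⟨(r, c), hrc⟩ : {q : (Fin n × (Fin h × Fin m)) ×
        (Fin n × (Fin h × Fin m)) // q.1.1 ≠ q.2.1}) = ⟨(r', c'), hrc'⟩) := by
      simp only [Subtype.mk_eq_mk, Prod.mk.injEq, not_and]
      intro e1 e2
      exact absurd (by rw [e1, e2]) hpp
    rw [if_neg hpp, if_neg hne2, zero_mul]

lemma coord_bigHole {N : ℕ} {α : Type*} [Fintype α] [DecidableEq α]
    {v : EuclideanSpace ℂ ((Fin N × α) × (Fin N × α))} (hv : v ∈ (bigHole N α)ᗮ)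
    (s : Fin N) (x y : α) : v ((s, x), (s, y)) = 0 := by
  have h0 := (Submodule.mem_orthogonal _ _).1 hv
    (EuclideanSpace.single (((s, x), (s, y))) (1 : ℂ))
    (Submodule.subset_span ⟨(s, x, y), rfl⟩)
  simpa [EuclideanSpace.inner_single_left] using h0

lemma coord_holeSub {N : ℕ} {α : Type*} [Fintype α] [DecidableEq α]
    {v : EuclideanSpace ℂ (Fin N × α)} {s : Fin N} (hv : v ∈ (holeSub N α s)ᗮ)
    (y : α) : v (s, y) = 0 := by
  have h0 := (Submodule.mem_orthogonal _ _).1 hv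
    (EuclideanSpace.single ((s, y)) (1 : ℂ))
    (Submodule.subset_span ⟨y, rfl⟩)
  simpa [EuclideanSpace.inner_single_left] using h0

lemma row_mem (hΨ : IsPIQLS Ψ) (r c : Fin n × (Fin h × Fin m)) (hc : c.1 ≠ r.1) :
    bigPhi Ψ Φ₁ Φ₂ r c ∈ (holeSub n (Fin h × Fin m) r.1)ᗮ := by
  show bigPhi Ψ Φ₁ Φ₂ r c ∈ (Submodule.span ℂ (Set.range fun x : Fin h × Fin m =>
    EuclideanSpace.single ((r.1, x)) (1 : ℂ)))ᗮ
  apply mem_orth_span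
  rintro u ⟨x, rfl⟩
  have hz : Ψ (prj r) (prj c) (r.1, x.1) = 0 :=
    coord_holeSub ((hΨ.1 (prj r)).2.1 (prj c) hc) x.1
  rw [EuclideanSpace.inner_single_left]
  simp [bigPhi, mk2, hz]

lemma col_mem (hΨ : IsPIQLS Ψ) (r c : Fin n × (Fin h × Fin m)) (hr : r.1 ≠ c.1) :
    bigPhi Ψ Φ₁ Φ₂ r c ∈ (holeSub n (Fin h × Fin m) c.1)ᗮ := by
  show bigPhi Ψ Φ₁ Φ₂ r c ∈ (Submodule.span ℂ (Set.range fun x : Fin h × Fin m =>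
    EuclideanSpace.single ((c.1, x)) (1 : ℂ)))ᗮ
  apply mem_orth_span
  rintro u ⟨x, rfl⟩
  have hz : Ψ (prj r) (prj c) (c.1, x.1) = 0 :=
    coord_holeSub ((hΨ.2 (prj c)).2.1 (prj r) hr) x.1
  rw [EuclideanSpace.inner_single_left]
  simp [bigPhi, mk2, hz]

lemma self_mem (hΨself : SelfOrthPIQLS Ψ) (r c : Fin n × (Fin h × Fin m))
    (hrc : r.1 ≠ c.1) :
    tens (bigPhi Ψ Φ₁ Φ₂ r c) (conjE (bigPhi Ψ Φ₁ Φ₂ c r)) ∈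
      (bigHole n (Fin h × Fin m))ᗮ := by
  show _ ∈ (Submodule.span ℂ (Set.range fun z : Fin n × (Fin h × Fin m) × (Fin h × Fin m) =>
    EuclideanSpace.single (((z.1, z.2.1), (z.1, z.2.2))) (1 : ℂ)))ᗮ
  apply mem_orth_span
  rintro u ⟨z, rfl⟩
  have hz : Ψ (prj r) (prj c) (z.1, z.2.1.1) * star (Ψ (prj c) (prj r) (z.1, z.2.2.1)) = 0 := by
    have h0 := coord_bigHole (hΨself.2.1 ⟨(prj r, prj c), hrc⟩) z.1 z.2.1.1 z.2.2.1
    simpa [tens, conjE] using h0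
  rw [EuclideanSpace.inner_single_left]
  have hval : tens (bigPhi Ψ Φ₁ Φ₂ r c) (conjE (bigPhi Ψ Φ₁ Φ₂ c r)) ((z.1, z.2.1), (z.1, z.2.2))
      = (Ψ (prj r) (prj c) (z.1, z.2.1.1) * star (Ψ (prj c) (prj r) (z.1, z.2.2.1))) *
        (bigX Φ₁ Φ₂ r c z.2.1.2 * star (bigX Φ₁ Φ₂ c r z.2.2.2)) := by
    simp only [tens, conjE, bigPhi, mk2, star_mul']
    ring
  rw [hval, hz, zero_mul, mul_zero]

lemma row_span (hΨ : IsPIQLS Ψ) (hΦ₁ : IsQLSOn Φ₁) (hΦ₂ : IsQLSOn Φ₂)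
    (r : Fin n × (Fin h × Fin m)) :
    Submodule.span ℂ (Set.range fun c : {c : Fin n × (Fin h × Fin m) // c.1 ≠ r.1} =>
      bigPhi Ψ Φ₁ Φ₂ r c) = (holeSub n (Fin h × Fin m) r.1)ᗮ :=
  span_eq_of_orthonormal (row_on hΨ hΦ₁ hΦ₂ r) (fun c => row_mem hΨ r c c.2)
    (by rw [card_ne_fst, finrank_orth_holeSub])

set_option maxHeartbeats 1000000 in
lemma col_span (hΨ : IsPIQLS Ψ) (hΦ₁ : IsQLSOn Φ₁) (hΦ₂ : IsQLSOn Φ₂)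
    (c : Fin n × (Fin h × Fin m)) :
    Submodule.span ℂ (Set.range fun r : {r : Fin n × (Fin h × Fin m) // r.1 ≠ c.1} =>
      bigPhi Ψ Φ₁ Φ₂ r c) = (holeSub n (Fin h × Fin m) c.1)ᗮ :=
  span_eq_of_orthonormal (col_on hΨ hΦ₁ hΦ₂ c) (fun r => col_mem (Φ₁ := Φ₁) (Φ₂ := Φ₂) hΨ r.1 c r.2)
    (by rw [card_ne_fst, finrank_orth_holeSub])

lemma self_span (hΨself : SelfOrthPIQLS Ψ) (hΦo : OrthQLSOn Φ₁ Φ₂) :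
    Submodule.span ℂ (Set.range fun p : {q : (Fin n × (Fin h × Fin m)) ×
        (Fin n × (Fin h × Fin m)) // q.1.1 ≠ q.2.1} =>
      tens (bigPhi Ψ Φ₁ Φ₂ p.1.1 p.1.2) (conjE (bigPhi Ψ Φ₁ Φ₂ p.1.2 p.1.1))) =
      (bigHole n (Fin h × Fin m))ᗮ :=
  span_eq_of_orthonormal (self_on hΨself hΦo)
    (fun p => self_mem hΨself p.1.1 p.1.2 p.2)
    (by rw [card_ne_pair, finrank_orth_bigHole])

end main

/-- Construction of an HSOQLS of type `(hm)ⁿ` from an HSOQLS `Ψ` of type `hⁿ` and a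
pair `Φ¹, Φ²` of orthogonal quantum Latin squares of dimension `m`:
`Φ_{(i,l),(j,k)} = Ψ_{i,j} ⊗ Φ¹_{l,k}` if `i ≤ j` (as row/column indices of the big
square) and `Φ_{(i,l),(j,k)} = Ψ_{i,j} ⊗ conj (Φ²_{k,l})` otherwise; the result is a
self-orthogonal PIQLS with holes `V_s ⊗ ℂ^m`. -/
theorem hsoqls_product {n h m : ℕ}
    (Ψ : (Fin n × Fin h) → (Fin n × Fin h) → EuclideanSpace ℂ (Fin n × Fin h))
    (hΨ : IsPIQLS Ψ) (hΨself : SelfOrthPIQLS Ψ)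
    (Φ₁ Φ₂ : Fin m → Fin m → EuclideanSpace ℂ (Fin m))
    (hΦ₁ : IsQLSOn Φ₁) (hΦ₂ : IsQLSOn Φ₂) (hΦo : OrthQLSOn Φ₁ Φ₂) :
    IsPIQLS (n := n) (α := Fin h × Fin m)
      (fun r c =>
        if (r.1 : ℕ) * h + (r.2.1 : ℕ) ≤ (c.1 : ℕ) * h + (c.2.1 : ℕ) then
          WithLp.toLp 2 (fun p : Fin n × (Fin h × Fin m) =>
            Ψ (r.1, r.2.1) (c.1, c.2.1) (p.1, p.2.1) * Φ₁ r.2.2 c.2.2 p.2.2)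
        else
          WithLp.toLp 2 (fun p : Fin n × (Fin h × Fin m) =>
            Ψ (r.1, r.2.1) (c.1, c.2.1) (p.1, p.2.1) *
              star (Φ₂ c.2.2 r.2.2 p.2.2))) ∧
    SelfOrthPIQLS (n := n) (α := Fin h × Fin m)
      (fun r c =>
        if (r.1 : ℕ) * h + (r.2.1 : ℕ) ≤ (c.1 : ℕ) * h + (c.2.1 : ℕ) then
          WithLp.toLp 2 (fun p : Fin n × (Fin h × Fin m) =>
            Ψ (r.1, r.2.1) (c.1, c.2.1) (p.1, p.2.1) * Φ₁ r.2.2 c.2.2 p.2.2)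
        else
          WithLp.toLp 2 (fun p : Fin n × (Fin h × Fin m) =>
            Ψ (r.1, r.2.1) (c.1, c.2.1) (p.1, p.2.1) *
              star (Φ₂ c.2.2 r.2.2 p.2.2))) := by
  have hE : (fun (r c : Fin n × (Fin h × Fin m)) =>
      if (r.1 : ℕ) * h + (r.2.1 : ℕ) ≤ (c.1 : ℕ) * h + (c.2.1 : ℕ) then
        WithLp.toLp 2 (fun p : Fin n × (Fin h × Fin m) =>
          Ψ (r.1, r.2.1) (c.1, c.2.1) (p.1, p.2.1) * Φ₁ r.2.2 c.2.2 p.2.2)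
      else
        WithLp.toLp 2 (fun p : Fin n × (Fin h × Fin m) =>
          Ψ (r.1, r.2.1) (c.1, c.2.1) (p.1, p.2.1) *
            star (Φ₂ c.2.2 r.2.2 p.2.2))) = bigPhi Ψ Φ₁ Φ₂ := by
    funext r c
    show _ = mk2 (Ψ (prj r) (prj c)) (bigX Φ₁ Φ₂ r c)
    unfold bigX keyf prj mk2 conjE
    split_ifs with hk
    · rfl
    · rfl
  rw [hE]
  refine ⟨⟨fun r => ⟨row_on hΨ hΦ₁ hΦ₂ r, fun c hc => row_mem hΨ r c hc,
      row_span hΨ hΦ₁ hΦ₂ r⟩,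
    fun c => ⟨col_on hΨ hΦ₁ hΦ₂ c, fun r hr => col_mem hΨ r c hr,
      col_span hΨ hΦ₁ hΦ₂ c⟩⟩,
    self_on hΨself hΦo, fun p => self_mem hΨself p.1.1 p.1.2 p.2,
    self_span hΨself hΦo⟩
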